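/- Let n ≥ 1, let A ≥ 1 be a real number, and let K be a set of n×n complex positive semidefinite matrices such that Re Tr X ≤ A for every X ∈ K. Then for all φ, φ' ∈ K: if A ≤ e⁻¹·n then S(φ) − S(φ') ≤ A·ln n, and if A ≥ e⁻¹·n then S(φ) − S(φ') ≤ e⁻¹·n + A·ln A. -/

import Mathlib

open Matrix
open scoped ComplexOrder

/-- The matrix logarithm, applying `Real.log` (with `Real.log 0 = 0`) to the eigenvalues of a
Hermitian matrix via the continuous functional calculus (junk value on non-Hermitian input). -/
noncomputable def matLog {n : ℕ} (M : Matrix (Fin n) (Fin n) ℂ) : Matrix (Fin n) (Fin n) ℂ :=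
  cfc Real.log M

/-- The von Neumann entropy `S(X) = −Re Tr(X · log X)`. -/
noncomputable def vnEntropy {n : ℕ} (X : Matrix (Fin n) (Fin n) ℂ) : ℝ :=
  -((X * matLog X).trace).re

lemma trace_mul_cfc {n : ℕ} {X : Matrix (Fin n) (Fin n) ℂ} (hX : X.IsHermitian) (f : ℝ → ℝ) :
    (X * cfc f X).trace = ∑ i, ((hX.eigenvalues i * f (hX.eigenvalues i) : ℝ) : ℂ) := by
  simp only [hX.cfc_eq, Matrix.IsHermitian.cfc, Unitary.conjStarAlgAut_apply, Unitary.coe_star]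
  set ev := hX.eigenvalues with hev
  set U := (hX.eigenvectorUnitary : Matrix (Fin n) (Fin n) ℂ) with hUdef
  have hU : star U * U = 1 := hX.eigenvectorUnitary.2.1
  have h2 : ∀ M : Matrix (Fin n) (Fin n) ℂ, star U * (U * M) = M := fun M => by
    rw [← mul_assoc, hU, one_mul]
  have hspec : X = U * diagonal (RCLike.ofReal ∘ ev) * star U := hX.spectral_theorem
  rw [hspec]
  rw [show (U * diagonal (RCLike.ofReal ∘ ev) * star U) *
      (U * diagonal (RCLike.ofReal ∘ f ∘ ev) * star U)
      = U * (diagonal (RCLike.ofReal ∘ ev) *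
        diagonal (RCLike.ofReal ∘ f ∘ ev)) * star U by
    simp only [mul_assoc, h2]]
  rw [Matrix.trace_mul_cycle]
  rw [hU, one_mul, diagonal_mul_diagonal, Matrix.trace_diagonal]
  simp [Function.comp]

lemma trace_re_eq_sum {n : ℕ} {X : Matrix (Fin n) (Fin n) ℂ} (hX : X.IsHermitian) :
    (X.trace).re = ∑ i, hX.eigenvalues i := by
  set ev := hX.eigenvalues with hev
  set U := (hX.eigenvectorUnitary : Matrix (Fin n) (Fin n) ℂ) with hUdef
  have hU : star U * U = 1 := hX.eigenvectorUnitary.2.1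
  have hspec : X = U * diagonal (RCLike.ofReal ∘ ev) * star U := hX.spectral_theorem
  rw [hspec, Matrix.trace_mul_cycle, hU, one_mul, Matrix.trace_diagonal]
  simp [Function.comp]

lemma vnEntropy_eq {n : ℕ} {X : Matrix (Fin n) (Fin n) ℂ} (hX : X.IsHermitian) :
    vnEntropy X = ∑ i, Real.negMulLog (hX.eigenvalues i) := by
  rw [vnEntropy, matLog, trace_mul_cfc hX Real.log]
  simp [Real.negMulLog]


lemma negMulLog_le_inv_e {x : ℝ} (hx : 0 ≤ x) : Real.negMulLog x ≤ (Real.exp 1)⁻¹ := by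
  rcases hx.eq_or_lt with h | h
  · simp [← h]
    positivity
  · have hex : (0:ℝ) < Real.exp 1 * x := by positivity
    have h1 := Real.one_sub_inv_le_log_of_pos hex
    rw [Real.log_mul (Real.exp_ne_zero 1) h.ne', Real.log_exp] at h1
    have h2 : -Real.log x ≤ (Real.exp 1 * x)⁻¹ := by linarith
    have h3 : x * (Real.exp 1 * x)⁻¹ = (Real.exp 1)⁻¹ := by
      field_simp
    calc Real.negMulLog x = x * (-Real.log x) := by rw [Real.negMulLog]; ring
    _ ≤ x * (Real.exp 1 * x)⁻¹ := by
        exact mul_le_mul_of_nonneg_left h2 hx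
    _ = (Real.exp 1)⁻¹ := h3

lemma sum_negMulLog_le {m : ℕ} (lam : Fin m → ℝ) (hnn : ∀ i, 0 ≤ lam i) :
    ∑ i, Real.negMulLog (lam i) ≤
      (∑ i, lam i) * Real.log m - (∑ i, lam i) * Real.log (∑ i, lam i) := by
  set t := ∑ i, lam i with htdef
  have htnn : 0 ≤ t := Finset.sum_nonneg fun i _ => hnn i
  rcases htnn.eq_or_lt with ht0 | htpos
  · have hall : ∀ i ∈ Finset.univ, lam i = 0 :=
      (Finset.sum_eq_zero_iff_of_nonneg fun i _ => hnn i).mp ht0.symm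
    have : ∑ i, Real.negMulLog (lam i) = 0 := by
      apply Finset.sum_eq_zero
      intro i hi
      rw [hall i hi, Real.negMulLog_zero]
    rw [this, ← ht0]
    simp
  · set s := Finset.univ.filter (fun i => lam i ≠ 0) with hsdef
    have hsum_s : ∑ i ∈ s, lam i = t := Finset.sum_filter_ne_zero _
    have hpos_s : ∀ i ∈ s, 0 < lam i := fun i hi =>
      lt_of_le_of_ne (hnn i) (Ne.symm (Finset.mem_filter.mp hi).2)
    have hw1 : ∑ i ∈ s, lam i / t = 1 := by
      rw [← Finset.sum_div, hsum_s, div_self htpos.ne']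
    have hJ := (strictConcaveOn_log_Ioi.concaveOn).le_map_sum
      (t := s) (w := fun i => lam i / t) (p := fun i => (lam i)⁻¹)
      (fun i _ => div_nonneg (hnn i) htnn) hw1
      (fun i hi => Set.mem_Ioi.mpr (inv_pos.mpr (hpos_s i hi)))
    simp only [smul_eq_mul] at hJ
    have hinner : ∑ i ∈ s, lam i / t * (lam i)⁻¹ = (s.card : ℝ) / t := by
      have hc : ∀ i ∈ s, lam i / t * (lam i)⁻¹ = t⁻¹ := fun i hi => by
        have h0 := (hpos_s i hi).ne'
        field_simp
      rw [Finset.sum_congr rfl hc, Finset.sum_const, nsmul_eq_mul, div_eq_mul_inv]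
    rw [hinner] at hJ
    have hlhs : ∑ i ∈ s, lam i / t * Real.log (lam i)⁻¹
        = (∑ i, Real.negMulLog (lam i)) / t := by
      rw [show ∑ i, Real.negMulLog (lam i) = ∑ i ∈ s, Real.negMulLog (lam i) from
        (Finset.sum_filter_of_ne (fun i _ h => by
          by_contra h0; exact h (by simp [h0]))).symm]
      rw [Finset.sum_div]
      refine Finset.sum_congr rfl fun i hi => ?_
      rw [Real.log_inv, Real.negMulLog]
      ring
    rw [hlhs] at hJ
    have hScard : (0:ℝ) < s.card := by
      have : s.Nonempty := by
        by_contra h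
        rw [Finset.not_nonempty_iff_eq_empty] at h
        rw [h, Finset.sum_empty] at hsum_s
        exact htpos.ne hsum_s
      exact_mod_cast Finset.card_pos.mpr this
    have hcard_le : (s.card : ℝ) ≤ m := by
      have h : s.card ≤ m := by
        have := Finset.card_le_card (Finset.filter_subset (fun i => lam i ≠ 0) Finset.univ)
        simpa using this
      exact_mod_cast h
    have hlog_le : Real.log ((s.card : ℝ) / t) ≤ Real.log ((m:ℝ) / t) :=
      Real.log_le_log (by positivity) (by gcongr)
    have hmpos : (0:ℝ) < m := lt_of_lt_of_le hScard hcard_le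
    have hfin : (∑ i, Real.negMulLog (lam i)) / t ≤ Real.log ((m:ℝ)/t) := le_trans hJ hlog_le
    rw [div_le_iff₀ htpos] at hfin
    rw [Real.log_div hmpos.ne' htpos.ne'] at hfin
    nlinarith [hfin]


lemma tlog_le {t A : ℝ} (ht : 0 ≤ t) (htA : t ≤ A) (hA : 0 < A) :
    t * Real.log A - t * Real.log t ≤ A - t := by
  rcases ht.eq_or_lt with h | h
  · rw [← h]; simpa using hA.le.trans (by linarith)
  · have h1 := Real.log_le_sub_one_of_pos (show (0:ℝ) < A / t by positivity)
    rw [Real.log_div hA.ne' h.ne'] at h1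
    have := mul_le_mul_of_nonneg_left h1 ht
    rw [mul_sub] at this
    have h2 : t * (A / t) = A := by field_simp
    nlinarith

lemma case1_aux {t A n : ℝ} (ht : 0 ≤ t) (htA : t ≤ A) (hA : 1 ≤ A)
    (hn : Real.exp 1 * A ≤ n) :
    (t * Real.log n - t * Real.log t) + A * Real.log A ≤ A * Real.log n := by
  have hApos : (0:ℝ) < A := lt_of_lt_of_le one_pos hA
  have hlogn : 1 + Real.log A ≤ Real.log n := by
    have : Real.log (Real.exp 1 * A) ≤ Real.log n :=
      Real.log_le_log (by positivity) hn
    rwa [Real.log_mul (Real.exp_ne_zero 1) hApos.ne', Real.log_exp] at this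
  have h3 := tlog_le ht htA hApos
  have h4 : (A - t) * (1 + Real.log A) ≤ (A - t) * Real.log n :=
    mul_le_mul_of_nonneg_left hlogn (by linarith)
  nlinarith

lemma neg_sum_negMulLog_le {m : ℕ} (lam : Fin m → ℝ) (hnn : ∀ i, 0 ≤ lam i)
    {A : ℝ} (hA : 1 ≤ A) (hsum : ∑ i, lam i ≤ A) :
    -∑ i, Real.negMulLog (lam i) ≤ A * Real.log A := by
  have hlogA : 0 ≤ Real.log A := Real.log_nonneg hA
  have h1 : ∀ i, lam i * Real.log (lam i) ≤ lam i * Real.log A := by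
    intro i
    rcases (hnn i).eq_or_lt with h | h
    · rw [← h]; simp
    · have hle : lam i ≤ A := le_trans
        (Finset.single_le_sum (fun j _ => hnn j) (Finset.mem_univ i)) hsum
      exact mul_le_mul_of_nonneg_left (Real.log_le_log h hle) (hnn i)
  calc -∑ i, Real.negMulLog (lam i) = ∑ i, lam i * Real.log (lam i) := by
        rw [← Finset.sum_neg_distrib]
        exact Finset.sum_congr rfl fun i _ => by rw [Real.negMulLog]; ring
    _ ≤ ∑ i, lam i * Real.log A := Finset.sum_le_sum fun i _ => h1 i
    _ = (∑ i, lam i) * Real.log A := by rw [Finset.sum_mul]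
    _ ≤ A * Real.log A := mul_le_mul_of_nonneg_right hsum hlogA



/-- **Diameter bound, bounded-trace case** (Lemma 5, second part): if every matrix in
`K ⊆ PSD(ℂⁿ)` has trace at most `A ≥ 1`, then for all `φ, φ' ∈ K`,
`S(φ) − S(φ') ≤ A·ln n` when `A ≤ e⁻¹·n`, and `S(φ) − S(φ') ≤ e⁻¹·n + A·ln A`
when `A ≥ e⁻¹·n`. -/
theorem stmt10 {n : ℕ} (hn : 1 ≤ n) (A : ℝ) (hA : 1 ≤ A)
    (K : Set (Matrix (Fin n) (Fin n) ℂ))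
    (hKpsd : ∀ X ∈ K, X.PosSemidef)
    (hKtr : ∀ X ∈ K, (X.trace).re ≤ A) :
    ∀ φ ∈ K, ∀ φ' ∈ K,
      (A ≤ (Real.exp 1)⁻¹ * n → vnEntropy φ - vnEntropy φ' ≤ A * Real.log n)
      ∧ ((Real.exp 1)⁻¹ * n ≤ A →
          vnEntropy φ - vnEntropy φ' ≤ (Real.exp 1)⁻¹ * n + A * Real.log A) := by
  intro φ hφ φ' hφ'
  have hP := hKpsd φ hφ
  have hP' := hKpsd φ' hφ'
  have hnn : ∀ i, 0 ≤ hP.1.eigenvalues i := fun i => hP.eigenvalues_nonneg i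
  have hnn' : ∀ i, 0 ≤ hP'.1.eigenvalues i := fun i => hP'.eigenvalues_nonneg i
  have htr : ∑ i, hP.1.eigenvalues i ≤ A := by
    rw [← trace_re_eq_sum hP.1]; exact hKtr φ hφ
  have htr' : ∑ i, hP'.1.eigenvalues i ≤ A := by
    rw [← trace_re_eq_sum hP'.1]; exact hKtr φ' hφ'
  have hSφ : vnEntropy φ = ∑ i, Real.negMulLog (hP.1.eigenvalues i) := vnEntropy_eq hP.1
  have hSφ' : vnEntropy φ' = ∑ i, Real.negMulLog (hP'.1.eigenvalues i) := vnEntropy_eq hP'.1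
  have hlow : -vnEntropy φ' ≤ A * Real.log A := by
    rw [hSφ']; exact neg_sum_negMulLog_le _ hnn' hA htr'
  have htnn : 0 ≤ ∑ i, hP.1.eigenvalues i := Finset.sum_nonneg fun i _ => hnn i
  constructor
  · intro hc
    have hen : Real.exp 1 * A ≤ (n : ℝ) := by
      have he : (0:ℝ) < Real.exp 1 := Real.exp_pos 1
      rw [← le_div_iff₀' he]
      rwa [div_eq_inv_mul]
    have hup : vnEntropy φ ≤ (∑ i, hP.1.eigenvalues i) * Real.log n
        - (∑ i, hP.1.eigenvalues i) * Real.log (∑ i, hP.1.eigenvalues i) := by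
      rw [hSφ]; exact sum_negMulLog_le _ hnn
    have := case1_aux htnn htr hA hen
    linarith
  · intro hc
    have hup : vnEntropy φ ≤ (Real.exp 1)⁻¹ * n := by
      rw [hSφ]
      calc ∑ i, Real.negMulLog (hP.1.eigenvalues i) ≤ ∑ _i : Fin n, (Real.exp 1)⁻¹ :=
            Finset.sum_le_sum fun i _ => negMulLog_le_inv_e (hnn i)
        _ = (Real.exp 1)⁻¹ * n := by
            rw [Finset.sum_const]
            simp [mul_comm]
    linarith
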